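/- arXiv:2302.08981 — 2 statements merged into one kernel-verified Lean document; each statement's English description precedes it below -/
import Mathlib

section
/- Let f : 2^U → ℝ be a monotone nondecreasing submodular set function with f(∅) = 0 on a finite ground set U. The greedy algorithm that iteratively adds the element with the largest marginal gain produces, after b steps, a set S_b with f(S_b) ≥ (1 − 1/e) max_{|S| ≤ b} f(S). -/
private lemma sum_marginal_aux {U : Type*} [DecidableEq U] (f : Finset U → ℝ)
    (hsubmod : ∀ (S T : Finset U) (x : U), S ⊆ T → x ∉ T →
      f (insert x T) - f T ≤ f (insert x S) - f S)
    (S : Finset U) (A : Finset U) :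
    f (S ∪ A) - f S ≤ ∑ x ∈ A, (f (insert x S) - f S) := by
  induction A using Finset.induction_on with
  | empty => simp
  | insert a A ha ih =>
    rw [Finset.sum_insert ha, Finset.union_insert]
    by_cases haS : a ∈ S ∪ A
    · rw [Finset.insert_eq_self.mpr haS]
      have haS' : a ∈ S := by
        rcases Finset.mem_union.mp haS with h | h
        · exact h
        · exact absurd h ha
      rw [Finset.insert_eq_self.mpr haS']
      linarith
    · have h := hsubmod S (S ∪ A) a Finset.subset_union_left haS
      linarith

/-- The greedy algorithm for maximizing a monotone nondecreasing submodular set function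
`f` with `f ∅ = 0` achieves, after `b` steps, a `(1 − 1/e)`-approximation of the optimal
value over sets of cardinality at most `b`. -/
theorem greedy_submodular_approximation
    {U : Type*} [Fintype U] [DecidableEq U]
    (f : Finset U → ℝ)
    (hmono : ∀ S T : Finset U, S ⊆ T → f S ≤ f T)
    (hsubmod : ∀ (S T : Finset U) (x : U), S ⊆ T → x ∉ T →
      f (insert x T) - f T ≤ f (insert x S) - f S)
    (hempty : f ∅ = 0)
    (Sgreedy : ℕ → Finset U) (hS0 : Sgreedy 0 = ∅)
    (hgreedy : ∀ i, ∃ x : U, Sgreedy (i + 1) = insert x (Sgreedy i) ∧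
      ∀ y : U, f (insert y (Sgreedy i)) ≤ f (insert x (Sgreedy i)))
    (b : ℕ) (T : Finset U) (hT : T.card ≤ b) :
    (1 - 1 / Real.exp 1) * f T ≤ f (Sgreedy b) := by
  rcases Nat.eq_zero_or_pos b with hb | hb
  · subst hb
    have hTe : T = ∅ := Finset.card_eq_zero.mp (Nat.le_zero.mp hT)
    rw [hTe, hS0, hempty]
    simp
  · have hb' : (0:ℝ) < b := by exact_mod_cast hb
    have hb1 : (1:ℝ) ≤ b := by exact_mod_cast hb
    obtain ⟨c, hc⟩ : ∃ c : ℝ, c = 1 - 1 / (b:ℝ) := ⟨_, rfl⟩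
    have hc0 : 0 ≤ c := by
      have h : 1 / (b:ℝ) ≤ 1 := by
        rw [div_le_one hb']; exact hb1
      rw [hc]; linarith
    have fT0 : 0 ≤ f T := by
      have := hmono ∅ T (Finset.empty_subset T)
      linarith [this, hempty.le]
    have step : ∀ i, f T - f (Sgreedy (i + 1)) ≤ c * (f T - f (Sgreedy i)) := by
      intro i
      obtain ⟨x, hx, hmax⟩ := hgreedy i
      set S := Sgreedy i with hSdef
      have hΔ : 0 ≤ f (insert x S) - f S := by
        have := hmono S (insert x S) (Finset.subset_insert x S)
        linarith
      have h1 : f T ≤ f (S ∪ T) := hmono T (S ∪ T) Finset.subset_union_right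
      have h2 := sum_marginal_aux f hsubmod S T
      have h3 : ∑ y ∈ T, (f (insert y S) - f S) ≤
          (T.card : ℝ) * (f (insert x S) - f S) := by
        calc ∑ y ∈ T, (f (insert y S) - f S)
            ≤ ∑ _y ∈ T, (f (insert x S) - f S) :=
              Finset.sum_le_sum (fun y _ => by linarith [hmax y])
          _ = (T.card : ℝ) * (f (insert x S) - f S) := by
              rw [Finset.sum_const, nsmul_eq_mul]
      have h4 : (T.card : ℝ) * (f (insert x S) - f S) ≤
          (b : ℝ) * (f (insert x S) - f S) := by
        apply mul_le_mul_of_nonneg_right _ hΔ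
        exact_mod_cast hT
      have key : f T ≤ f S + (b : ℝ) * (f (Sgreedy (i+1)) - f S) := by
        rw [hx]; linarith
      have hdiv : (f T - f S) / (b : ℝ) ≤ (f T - f S) - (f T - f (Sgreedy (i+1))) := by
        rw [div_le_iff₀ hb']
        nlinarith [key]
      have hring : c * (f T - f S) = (f T - f S) - (f T - f S) / (b : ℝ) := by
        rw [hc]; field_simp
      linarith
    have gle : ∀ i, f T - f (Sgreedy i) ≤ c ^ i * f T := by
      intro i
      induction i with
      | zero => simp [hS0, hempty]
      | succ n ih =>
        calc f T - f (Sgreedy (n+1)) ≤ c * (f T - f (Sgreedy n)) := step n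
          _ ≤ c * (c ^ n * f T) := by
              exact mul_le_mul_of_nonneg_left ih hc0
          _ = c ^ (n+1) * f T := by ring
    have cpow : c ^ b ≤ Real.exp (-1) := by
      have h1 : c ≤ Real.exp (-(1 / (b:ℝ))) := by
        have := Real.add_one_le_exp (-(1 / (b:ℝ)))
        linarith
      have h2 : c ^ b ≤ (Real.exp (-(1 / (b:ℝ)))) ^ b :=
        pow_le_pow_left₀ hc0 h1 b
      have h3 : (Real.exp (-(1 / (b:ℝ)))) ^ b = Real.exp (-1) := by
        rw [← Real.exp_nat_mul]
        congr 1
        field_simp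
      rw [h3] at h2; exact h2
    have hfin : f T - f (Sgreedy b) ≤ Real.exp (-1) * f T := by
      calc f T - f (Sgreedy b) ≤ c ^ b * f T := gle b
        _ ≤ Real.exp (-1) * f T := mul_le_mul_of_nonneg_right cpow fT0
    have hexp : Real.exp (-1) = 1 / Real.exp 1 := by
      rw [Real.exp_neg]; exact (one_div _).symm
    rw [hexp] at hfin
    nlinarith [hfin]
end

section
/- Let Σ be an N×N symmetric positive definite matrix and σ > 0. The set function f(S) = (1/2) log det(Σ_S + σ² I_{|S|}) − (|S|/2) log(σ²), where Σ_S is the principal submatrix of Σ indexed by S, is monotone nondecreasing and submodular with f(∅) = 0. -/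
open Matrix Finset

namespace GaussIG

variable {N : ℕ}

/-- Principal submatrix indexed by a finset. -/
def psub (M : Matrix (Fin N) (Fin N) ℝ) (S : Finset (Fin N)) :
    Matrix {x // x ∈ S} {x // x ∈ S} ℝ :=
  M.submatrix (fun i => (i : Fin N)) (fun i => (i : Fin N))

/-- Extension of a vector by zero. -/
def extz (S : Finset (Fin N)) (a : {x // x ∈ S} → ℝ) : Fin N → ℝ :=
  fun j => if h : j ∈ S then a ⟨j, h⟩ else 0

lemma extz_of_not_mem {S : Finset (Fin N)} {j : Fin N} (hj : j ∉ S)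
    (a : {x // x ∈ S} → ℝ) : extz S a j = 0 := by simp [extz, hj]

lemma extz_dot (S : Finset (Fin N)) (a : {x // x ∈ S} → ℝ) (c : Fin N → ℝ) :
    extz S a ⬝ᵥ c = ∑ i : {x // x ∈ S}, a i * c ↑i := by
  classical
  have h0 : ∀ j ∈ Finset.univ, j ∉ S → extz S a j * c j = 0 := by
    intro j _ hj; simp [extz, hj]
  calc extz S a ⬝ᵥ c = ∑ j : Fin N, extz S a j * c j := rfl
    _ = ∑ j ∈ S, extz S a j * c j := (Finset.sum_subset (Finset.subset_univ S) h0).symm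
    _ = ∑ i ∈ S.attach, extz S a ↑i * c ↑i := (Finset.sum_attach S _).symm
    _ = ∑ i : {x // x ∈ S}, a i * c ↑i := by
        rw [Finset.univ_eq_attach]
        refine Finset.sum_congr rfl fun i _ => ?_
        simp [extz, i.2]

lemma mulVec_extz (M : Matrix (Fin N) (Fin N) ℝ) (S : Finset (Fin N))
    (b : {x // x ∈ S} → ℝ) (j : Fin N) :
    (M *ᵥ extz S b) j = ∑ i : {x // x ∈ S}, b i * M j ↑i := by
  have : (M *ᵥ extz S b) j = extz S b ⬝ᵥ (fun k => M j k) := dotProduct_comm _ _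
  rw [this, extz_dot]

lemma quad_extz (M : Matrix (Fin N) (Fin N) ℝ) (S : Finset (Fin N))
    (a b : {x // x ∈ S} → ℝ) :
    extz S a ⬝ᵥ (M *ᵥ extz S b) = a ⬝ᵥ (psub M S *ᵥ b) := by
  rw [extz_dot]
  have h : ∀ i : {x // x ∈ S}, (M *ᵥ extz S b) ↑i = (psub M S *ᵥ b) i := by
    intro i
    rw [mulVec_extz]
    simp only [Matrix.mulVec, dotProduct, psub, Matrix.submatrix_apply]
    exact Finset.sum_congr rfl fun k _ => mul_comm _ _
  simp only [h]
  rfl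

lemma extz_ne_zero {S : Finset (Fin N)} {a : {x // x ∈ S} → ℝ} (ha : a ≠ 0) :
    extz S a ≠ 0 := by
  obtain ⟨i, hi⟩ := Function.ne_iff.mp ha
  refine Function.ne_iff.mpr ⟨↑i, ?_⟩
  simpa [extz, i.2] using hi

lemma psub_posDef {M : Matrix (Fin N) (Fin N) ℝ} (hM : M.PosDef) (S : Finset (Fin N)) :
    (psub M S).PosDef := by
  refine posDef_iff_dotProduct_mulVec.mpr ⟨hM.isHermitian.submatrix _, fun a ha => ?_⟩
  have hs : star a = a := by funext j; exact star_trivial _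
  rw [hs, ← quad_extz]
  have := hM.dotProduct_mulVec_pos (extz_ne_zero ha)
  rwa [star_trivial] at this

lemma psub_det_pos {M : Matrix (Fin N) (Fin N) ℝ} (hM : M.PosDef) (S : Finset (Fin N)) :
    0 < (psub M S).det := (psub_posDef hM S).det_pos

lemma mulVec_inv_cancel {ι : Type*} [Fintype ι] [DecidableEq ι]
    {P : Matrix ι ι ℝ} (hP : P.PosDef) (v : ι → ℝ) : P *ᵥ (P⁻¹ *ᵥ v) = v := by
  rw [Matrix.mulVec_mulVec, Matrix.mul_nonsing_inv _ hP.det_pos.ne'.isUnit, Matrix.one_mulVec]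

lemma dot_symm {ι : Type*} [Fintype ι] {P : Matrix ι ι ℝ} (hs : Pᵀ = P)
    (a b : ι → ℝ) : a ⬝ᵥ (P *ᵥ b) = b ⬝ᵥ (P *ᵥ a) := by
  rw [Matrix.dotProduct_mulVec]
  conv_lhs => rw [← hs]
  rw [Matrix.vecMul_transpose, dotProduct_comm]

/-- Variational inequality: `2⟨u,v⟩ - ⟨u,Pu⟩ ≤ ⟨v,P⁻¹v⟩` for positive definite `P`. -/
lemma varIneq {ι : Type*} [Fintype ι] [DecidableEq ι]
    {P : Matrix ι ι ℝ} (hP : P.PosDef) (hs : Pᵀ = P) (u v : ι → ℝ) :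
    2 * (u ⬝ᵥ v) - u ⬝ᵥ (P *ᵥ u) ≤ v ⬝ᵥ (P⁻¹ *ᵥ v) := by
  set y := P⁻¹ *ᵥ v with hy
  have hPy : P *ᵥ y = v := mulVec_inv_cancel hP v
  have h0 : 0 ≤ (u - y) ⬝ᵥ (P *ᵥ (u - y)) := by
    have := hP.posSemidef.dotProduct_mulVec_nonneg (u - y)
    rwa [star_trivial] at this
  have h1 : y ⬝ᵥ (P *ᵥ u) = u ⬝ᵥ v := by rw [dot_symm hs, hPy]
  have hexp : (u - y) ⬝ᵥ (P *ᵥ (u - y))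
      = u ⬝ᵥ (P *ᵥ u) - 2 * (u ⬝ᵥ v) + v ⬝ᵥ y := by
    rw [Matrix.mulVec_sub, dotProduct_sub, sub_dotProduct,
      sub_dotProduct, hPy, h1, dotProduct_comm y v]
    ring
  rw [hexp] at h0
  linarith

/-- The Schur-complement scalar obtained when inserting `x`. -/
noncomputable def schur (M : Matrix (Fin N) (Fin N) ℝ) (S : Finset (Fin N)) (x : Fin N) : ℝ :=
  M x x - (fun i : {y // y ∈ S} => M ↑i x) ⬝ᵥ ((psub M S)⁻¹ *ᵥ (fun i : {y // y ∈ S} => M ↑i x))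

lemma det_psub_insert {M : Matrix (Fin N) (Fin N) ℝ} (hM : M.PosDef) (hMs : Mᵀ = M)
    {S : Finset (Fin N)} {x : Fin N} (hx : x ∉ S) :
    (psub M (insert x S)).det = (psub M S).det * schur M S x := by
  classical
  set A := psub M S with hA
  haveI : Invertible A := A.invertibleOfIsUnitDet (psub_det_pos hM S).ne'.isUnit
  set B : Matrix {y // y ∈ S} PUnit.{1} ℝ := fun i _ => M ↑i x with hB
  set C : Matrix PUnit.{1} {y // y ∈ S} ℝ := fun _ j => M x ↑j with hC
  set D : Matrix PUnit.{1} PUnit.{1} ℝ := fun _ _ => M x x with hD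
  set e : {y // y ∈ insert x S} ≃ ({y // y ∈ S} ⊕ PUnit.{1}) :=
    (Finset.subtypeInsertEquivOption hx).trans (Equiv.optionEquivSumPUnit _) with he
  have hre : psub M (insert x S) = (Matrix.fromBlocks A B C D).submatrix e e := by
    ext i j
    rw [Matrix.submatrix_apply]
    by_cases hi : (i : Fin N) = x <;> by_cases hj : (j : Fin N) = x <;>
      simp [he, Finset.subtypeInsertEquivOption, hi, hj, hA, hB, hC, hD, psub,
        Matrix.fromBlocks]
  rw [hre, Matrix.det_submatrix_equiv_self, Matrix.det_fromBlocks₁₁, invOf_eq_nonsing_inv]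
  congr 1
  rw [Matrix.det_unique]
  show (D - C * A⁻¹ * B) PUnit.unit PUnit.unit = schur M S x
  rw [Matrix.sub_apply]
  simp only [hD, schur]
  congr 1
  simp only [Matrix.mul_apply]
  simp only [Matrix.mul_apply, Matrix.mulVec, dotProduct, hB, hC, Finset.sum_mul,
    Finset.mul_sum]
  rw [Finset.sum_comm]
  refine Finset.sum_congr rfl fun i _ => Finset.sum_congr rfl fun k _ => ?_
  have hsym : M x ↑i = M ↑i x := by
    conv_rhs => rw [← hMs]
    rfl
  rw [hsym, ← hA]; ring


lemma psub_symm {M : Matrix (Fin N) (Fin N) ℝ} (hMs : Mᵀ = M) (S : Finset (Fin N)) :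
    (psub M S)ᵀ = psub M S := by
  ext i j
  exact congrFun (congrFun hMs ↑i) ↑j

/-- Lower bound on the Schur complement scalar: it is at least the noise variance. -/
lemma schur_ge {M Sg : Matrix (Fin N) (Fin N) ℝ} {σ2 : ℝ}
    (hSg : Sg.PosSemidef) (hσ2 : 0 < σ2) (hMeq : M = Sg + σ2 • 1)
    (hM : M.PosDef) (hMs : Mᵀ = M)
    {S : Finset (Fin N)} {x : Fin N} (hx : x ∉ S) :
    σ2 ≤ schur M S x := by
  classical
  set v : {y // y ∈ S} → ℝ := fun i => M ↑i x with hv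
  set u : {y // y ∈ S} → ℝ := (psub M S)⁻¹ *ᵥ v with hu
  set U : Fin N → ℝ := extz S u with hU
  set w : Fin N → ℝ := Pi.single x 1 - U with hw
  have hAv : psub M S *ᵥ u = v := mulVec_inv_cancel (psub_posDef hM S) v
  have hUx : U x = 0 := extz_of_not_mem hx u
  have hwx : w x = 1 := by simp [hw, hUx]
  have hMs_single : M *ᵥ Pi.single x 1 = fun i => M i x := by
    funext i; simp [Matrix.mulVec_single]
  have h1 : Pi.single x (1:ℝ) ⬝ᵥ (M *ᵥ Pi.single x 1) = M x x := by
    rw [single_dotProduct, one_mul, hMs_single]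
  have h2 : U ⬝ᵥ (M *ᵥ Pi.single x 1) = u ⬝ᵥ v := by
    rw [hMs_single, hU, extz_dot]
    rfl
  have h3 : Pi.single x (1:ℝ) ⬝ᵥ (M *ᵥ U) = u ⬝ᵥ v := by
    rw [single_dotProduct, one_mul, hU, mulVec_extz]
    simp only [dotProduct]
    refine Finset.sum_congr rfl fun i _ => ?_
    have hsym : Mᵀ ↑i x = M ↑i x := congrFun (congrFun hMs ↑i) x
    rw [show M x ↑i = M ↑i x from hsym]
  have h4 : U ⬝ᵥ (M *ᵥ U) = u ⬝ᵥ v := by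
    rw [hU, quad_extz, hAv]
  have key1 : w ⬝ᵥ (M *ᵥ w) = M x x - u ⬝ᵥ v := by
    rw [hw, Matrix.mulVec_sub, dotProduct_sub, sub_dotProduct,
      sub_dotProduct, h1, h2, h3, h4]
    ring
  have key2 : schur M S x = M x x - u ⬝ᵥ v := by
    have : schur M S x = M x x - v ⬝ᵥ u := rfl
    rw [this, dotProduct_comm]
  have hq : 0 ≤ w ⬝ᵥ (Sg *ᵥ w) := by
    have := hSg.dotProduct_mulVec_nonneg w
    rwa [star_trivial] at this
  have hww : 1 ≤ w ⬝ᵥ w := by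
    have hle : w x * w x ≤ ∑ j, w j * w j :=
      Finset.single_le_sum (fun j _ => mul_self_nonneg (w j)) (Finset.mem_univ x)
    rw [hwx, one_mul] at hle
    exact hle
  have hsplit : w ⬝ᵥ (M *ᵥ w) = w ⬝ᵥ (Sg *ᵥ w) + σ2 * (w ⬝ᵥ w) := by
    rw [hMeq, Matrix.add_mulVec, dotProduct_add]
    congr 1
    rw [Matrix.smul_mulVec, Matrix.one_mulVec, dotProduct_smul,
      smul_eq_mul]
  nlinarith [mul_le_mul_of_nonneg_left hww hσ2.le]

/-- The Schur complement scalar is antitone in the conditioning set. -/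
lemma schur_anti {M : Matrix (Fin N) (Fin N) ℝ} (hM : M.PosDef) (hMs : Mᵀ = M)
    {S T : Finset (Fin N)} (hST : S ⊆ T) (x : Fin N) :
    schur M T x ≤ schur M S x := by
  classical
  set vS : {y // y ∈ S} → ℝ := fun i => M ↑i x with hvS
  set vT : {y // y ∈ T} → ℝ := fun i => M ↑i x with hvT
  set u : {y // y ∈ S} → ℝ := (psub M S)⁻¹ *ᵥ vS with hu
  set U : Fin N → ℝ := extz S u with hU
  set u' : {y // y ∈ T} → ℝ := fun j => U ↑j with hu'
  have hAv : psub M S *ᵥ u = vS := mulVec_inv_cancel (psub_posDef hM S) vS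
  have hUT : extz T u' = U := by
    funext j
    by_cases hj : j ∈ T
    · simp [extz, hj, hu']
    · rw [extz_of_not_mem hj, hU, extz_of_not_mem (fun hjs => hj (hST hjs))]
  have hvar := varIneq (psub_posDef hM T) (psub_symm hMs T) u' vT
  have e1 : u' ⬝ᵥ vT = u ⬝ᵥ vS := by
    have l1 : extz T u' ⬝ᵥ (fun j => M j x) = u' ⬝ᵥ vT := extz_dot T u' _
    have l2 : extz S u ⬝ᵥ (fun j => M j x) = u ⬝ᵥ vS := extz_dot S u _
    rw [← l1, hUT, hU, l2]
  have e2 : u' ⬝ᵥ (psub M T *ᵥ u') = u ⬝ᵥ vS := by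
    rw [← quad_extz M T u' u', hUT, hU, quad_extz, hAv]
  have hcomm : vS ⬝ᵥ ((psub M S)⁻¹ *ᵥ vS) = u ⬝ᵥ vS := dotProduct_comm _ _
  have hineq : vS ⬝ᵥ ((psub M S)⁻¹ *ᵥ vS) ≤ vT ⬝ᵥ ((psub M T)⁻¹ *ᵥ vT) := by
    rw [hcomm]
    calc u ⬝ᵥ vS = 2 * (u' ⬝ᵥ vT) - u' ⬝ᵥ (psub M T *ᵥ u') := by rw [e1, e2]; ring
      _ ≤ vT ⬝ᵥ ((psub M T)⁻¹ *ᵥ vT) := hvar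
  have hS : schur M S x = M x x - vS ⬝ᵥ ((psub M S)⁻¹ *ᵥ vS) := rfl
  have hT : schur M T x = M x x - vT ⬝ᵥ ((psub M T)⁻¹ *ᵥ vT) := rfl
  rw [hS, hT]
  linarith

end GaussIG

/-- For `Σ` symmetric positive definite and `σ > 0`, the set function
`f(S) = (1/2) log det(Σ_S + σ² I) − (|S|/2) log σ²` (joint-Gaussian information gain)
is monotone nondecreasing and submodular with `f ∅ = 0`. -/
theorem gaussian_information_gain_monotone_submodular
    (N : ℕ) (Sig : Matrix (Fin N) (Fin N) ℝ)
    (hSym : Sig.IsSymm) (hPD : Sig.PosDef) (σ : ℝ) (hσ : 0 < σ)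
    (f : Finset (Fin N) → ℝ)
    (hf : ∀ S : Finset (Fin N), f S =
      (1 / 2) * Real.log
        ((Sig.submatrix (fun i : {x // x ∈ S} => (i : Fin N))
            (fun i : {x // x ∈ S} => (i : Fin N))
          + σ ^ 2 • (1 : Matrix {x // x ∈ S} {x // x ∈ S} ℝ)).det)
      - (S.card / 2 : ℝ) * Real.log (σ ^ 2)) :
    f ∅ = 0 ∧
    (∀ S T : Finset (Fin N), S ⊆ T → f S ≤ f T) ∧
    (∀ (S T : Finset (Fin N)) (x : Fin N), S ⊆ T → x ∉ T →
      f (insert x T) - f T ≤ f (insert x S) - f S) := by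
  classical
  open GaussIG in
  set M : Matrix (Fin N) (Fin N) ℝ := Sig + σ ^ 2 • 1 with hMdef
  have hσ2 : (0:ℝ) < σ ^ 2 := pow_pos hσ 2
  have hI : (σ ^ 2 • (1 : Matrix (Fin N) (Fin N) ℝ)).PosSemidef := by
    rw [Matrix.smul_one_eq_diagonal]
    exact Matrix.PosSemidef.diagonal (fun i => hσ2.le)
  have hM : M.PosDef := hPD.add_posSemidef hI
  have hMs : Mᵀ = M := by
    rw [hMdef, Matrix.transpose_add, Matrix.transpose_smul, Matrix.transpose_one, hSym]
  have hfM : ∀ S : Finset (Fin N),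
      f S = (1 / 2) * Real.log (GaussIG.psub M S).det
        - (S.card / 2 : ℝ) * Real.log (σ ^ 2) := by
    intro S
    rw [hf S]
    have heq : Sig.submatrix (fun i : {x // x ∈ S} => (i : Fin N))
          (fun i : {x // x ∈ S} => (i : Fin N))
        + σ ^ 2 • (1 : Matrix {x // x ∈ S} {x // x ∈ S} ℝ) = GaussIG.psub M S := by
      ext i j
      by_cases h : i = j
      · simp [GaussIG.psub, Matrix.one_apply, h, hMdef]
      · simp [GaussIG.psub, Matrix.one_apply, h, hMdef,
          Subtype.coe_injective.ne h]
    rw [heq]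
  have hinc : ∀ (S : Finset (Fin N)) (x : Fin N), x ∉ S →
      f (insert x S) - f S
        = (1 / 2) * Real.log (GaussIG.schur M S x) - (1 / 2) * Real.log (σ ^ 2) := by
    intro S x hx
    have hcle : σ ^ 2 ≤ GaussIG.schur M S x :=
      GaussIG.schur_ge hPD.posSemidef hσ2 hMdef hM hMs hx
    have hcpos : (0:ℝ) < GaussIG.schur M S x := lt_of_lt_of_le hσ2 hcle
    rw [hfM, hfM, GaussIG.det_psub_insert hM hMs hx,
      Real.log_mul (GaussIG.psub_det_pos hM S).ne' hcpos.ne',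
      Finset.card_insert_of_notMem hx]
    push_cast
    ring
  have hstep : ∀ (S : Finset (Fin N)) (x : Fin N), x ∉ S → f S ≤ f (insert x S) := by
    intro S x hx
    have h1 := hinc S x hx
    have hcle : σ ^ 2 ≤ GaussIG.schur M S x :=
      GaussIG.schur_ge hPD.posSemidef hσ2 hMdef hM hMs hx
    have hcpos : (0:ℝ) < GaussIG.schur M S x := lt_of_lt_of_le hσ2 hcle
    have hlog : Real.log (σ ^ 2) ≤ Real.log (GaussIG.schur M S x) :=
      (Real.log_le_log_iff hσ2 hcpos).mpr hcle
    linarith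
  have hmono : ∀ U S₀ : Finset (Fin N), f S₀ ≤ f (S₀ ∪ U) := by
    intro U
    induction U using Finset.induction_on with
    | empty => intro S₀; rw [Finset.union_empty]
    | @insert a V ha IH =>
      intro S₀
      have h1 : f S₀ ≤ f (S₀ ∪ V) := IH S₀
      rw [Finset.union_insert]
      by_cases hmem : a ∈ S₀ ∪ V
      · rw [Finset.insert_eq_self.mpr hmem]; exact h1
      · exact h1.trans (hstep _ a hmem)
  refine ⟨?_, ?_, ?_⟩
  · rw [hf]
    haveI : IsEmpty {x // x ∈ (∅ : Finset (Fin N))} :=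
      ⟨fun i => (Finset.notMem_empty _ i.2)⟩
    simp [Matrix.det_isEmpty]
  · intro S T hST
    have := hmono T S
    rwa [Finset.union_eq_right.mpr hST] at this
  · intro S T x hST hxT
    have hxS : x ∉ S := fun h => hxT (hST h)
    rw [hinc T x hxT, hinc S x hxS]
    have hcleT : σ ^ 2 ≤ GaussIG.schur M T x :=
      GaussIG.schur_ge hPD.posSemidef hσ2 hMdef hM hMs hxT
    have hposT : (0:ℝ) < GaussIG.schur M T x := lt_of_lt_of_le hσ2 hcleT
    have hanti := GaussIG.schur_anti hM hMs hST x
    have hposS : (0:ℝ) < GaussIG.schur M S x := lt_of_lt_of_le hposT hanti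
    have hlog : Real.log (GaussIG.schur M T x) ≤ Real.log (GaussIG.schur M S x) :=
      (Real.log_le_log_iff hposT hposS).mpr hanti
    linarith
end
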